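/- For connected graphs G and H, γ(G □ H) = 1 / (1/γ(G) + 1/γ(H)), where G □ H is the Cartesian product. -/

import Mathlib

open Finset SimpleGraph

/-- `max_{uv ∈ E(G)} |x_u - x_v|` (as a real supremum over adjacent pairs). -/
noncomputable def edgeSup {V : Type*} (G : SimpleGraph V) (x : V → ℝ) : ℝ :=
  ⨆ p : {p : V × V // G.Adj p.1 p.2}, |x p.1.1 - x p.1.2|

/-- The `l_∞`-smoothing parameter `γ(G)`. -/
noncomputable def gamma {V : Type*} [Fintype V] (G : SimpleGraph V) : ℝ :=
  sInf {y | ∃ x : V → ℝ, (∑ v, x v) = 0 ∧ (⨆ v, |x v|) = 1 ∧ y = edgeSup G x}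

/-- Transmission of a vertex: sum of graph distances to all vertices. -/
noncomputable def transmission {V : Type*} [Fintype V] (G : SimpleGraph V) (u : V) : ℕ :=
  ∑ v, G.dist u v

lemma le_edgeSup {V : Type*} [Fintype V] {G : SimpleGraph V} (x : V → ℝ) {a b : V}
    (h : G.Adj a b) : |x a - x b| ≤ edgeSup G x := by
  unfold edgeSup
  exact le_ciSup (f := fun p : {p : V × V // G.Adj p.1 p.2} => |x p.1.1 - x p.1.2|)
    (Set.Finite.bddAbove (Set.finite_range _)) ⟨(a, b), h⟩

lemma walk_telescope {V : Type*} {G : SimpleGraph V} (x : V → ℝ) {c : ℝ}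
    (hc : ∀ a b : V, G.Adj a b → |x a - x b| ≤ c) :
    ∀ {u v : V} (p : G.Walk u v), |x u - x v| ≤ p.length * c := by
  intro u v p
  induction p with
  | nil => simp
  | cons h q ih =>
    rename_i a z w
    have h1 := hc _ _ h
    have h2 : |x a - x w| ≤ |x a - x z| + |x z - x w| := abs_sub_le _ _ _
    rw [SimpleGraph.Walk.length_cons]
    push_cast
    nlinarith [ih]

lemma abs_sub_le_dist_mul {V : Type*} {G : SimpleGraph V} (hG : G.Connected) (x : V → ℝ) {c : ℝ}
    (hc : ∀ a b : V, G.Adj a b → |x a - x b| ≤ c) (u v : V) :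
    |x u - x v| ≤ (G.dist u v : ℝ) * c := by
  obtain ⟨p, hp⟩ := (hG.preconnected u v).exists_walk_length_eq_dist
  rw [← hp]
  exact walk_telescope x hc p

lemma gamma_eq {V : Type*} [Fintype V] {G : SimpleGraph V} (hG : G.Connected) :
    gamma G = (Fintype.card V : ℝ) / ((Finset.univ.sup (transmission G) : ℕ) : ℝ) := by
  haveI : Nonempty V := hG.nonempty
  by_cases hE : ∃ a b : V, G.Adj a b
  · obtain ⟨a0, b0, hab⟩ := hE
    set n : ℕ := Fintype.card V with hn
    set T : ℕ := Finset.univ.sup (transmission G) with hT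
    have hnpos : 0 < n := Fintype.card_pos
    have hTpos : 0 < T := by
      have h1 : 1 ≤ transmission G a0 := by
        have : G.dist a0 b0 = 1 := SimpleGraph.dist_eq_one_iff_adj.mpr hab
        calc 1 = G.dist a0 b0 := this.symm
          _ ≤ ∑ v, G.dist a0 v := Finset.single_le_sum (fun v _ => Nat.zero_le _) (mem_univ b0)
      exact lt_of_lt_of_le h1 (Finset.le_sup (mem_univ a0))
    have hTR : (0:ℝ) < (T:ℝ) := by exact_mod_cast hTpos
    have hnR : (0:ℝ) < (n:ℝ) := by exact_mod_cast hnpos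
    set S : Set ℝ :=
      {y | ∃ x : V → ℝ, (∑ v, x v) = 0 ∧ (⨆ v, |x v|) = 1 ∧ y = edgeSup G x} with hS
    -- lower bound
    have hlow : ∀ y ∈ S, (n:ℝ) / T ≤ y := by
      rintro y ⟨x, hsum, hsup, rfl⟩
      set c := edgeSup G x with hc
      have hc0 : 0 ≤ c := le_trans (abs_nonneg _) (le_edgeSup x hab)
      have hadj : ∀ a b : V, G.Adj a b → |x a - x b| ≤ c := fun a b h => le_edgeSup x h
      obtain ⟨u, -, hu⟩ := Finset.exists_max_image Finset.univ (fun v => |x v|) univ_nonempty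
      have hu1 : |x u| = 1 := by
        rw [← hsup]
        refine le_antisymm ?_ (ciSup_le fun v => hu v (mem_univ v))
        exact le_ciSup (f := fun v : V => |x v|) (Set.Finite.bddAbove (Set.finite_range _)) u
      have key : (n:ℝ) ≤ (T:ℝ) * c := by
        have e1 : (∑ v, (x u - x v)) = n * x u := by
          rw [Finset.sum_sub_distrib, hsum, Finset.sum_const, card_univ, sub_zero,
            nsmul_eq_mul, hn]
        have e2 : (n:ℝ) = |∑ v, (x u - x v)| := by
          rw [e1, abs_mul, hu1, mul_one, Nat.abs_cast]
        calc (n:ℝ) = |∑ v, (x u - x v)| := e2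
          _ ≤ ∑ v, |x u - x v| := Finset.abs_sum_le_sum_abs _ _
          _ ≤ ∑ v, (G.dist u v : ℝ) * c :=
              Finset.sum_le_sum fun v _ => abs_sub_le_dist_mul hG x hadj u v
          _ = (∑ v, (G.dist u v : ℝ)) * c := by rw [Finset.sum_mul]
          _ = ((transmission G u : ℕ) : ℝ) * c := by
              rw [transmission]; push_cast; ring
          _ ≤ (T:ℝ) * c := by
              have : transmission G u ≤ T := Finset.le_sup (mem_univ u)
              exact mul_le_mul_of_nonneg_right (by exact_mod_cast this) hc0
      rw [div_le_iff₀ hTR]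
      linarith
    -- upper bound: membership
    have hmem : (n:ℝ) / T ∈ S := by
      obtain ⟨u, -, hu⟩ := Finset.exists_mem_eq_sup Finset.univ univ_nonempty (transmission G)
      obtain ⟨w, hw⟩ : ∃ w, G.Adj u w := by
        by_cases h : u = a0
        · exact ⟨b0, h ▸ hab⟩
        · obtain ⟨p⟩ := hG.preconnected u a0
          cases p with
          | nil => exact absurd rfl h
          | cons h' _ => exact ⟨_, h'⟩
      set x : V → ℝ := fun v => 1 - ((n:ℝ)/T) * (G.dist u v) with hx
      have hTu : (∑ v, ((G.dist u v : ℕ) : ℝ)) = (T:ℝ) := by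
        rw [hT, hu, transmission]; push_cast; ring
      have h2T : ∀ v, (n:ℝ) * (G.dist u v) ≤ 2 * T := by
        intro v
        have hnat : n * G.dist u v ≤ transmission G u + transmission G v := by
          calc n * G.dist u v = ∑ _z : V, G.dist u v := by
                rw [Finset.sum_const, card_univ, smul_eq_mul, hn]
            _ ≤ ∑ z, (G.dist u z + G.dist v z) := by
                refine Finset.sum_le_sum fun z _ => ?_
                calc G.dist u v ≤ G.dist u z + G.dist z v := hG.dist_triangle
                  _ = G.dist u z + G.dist v z := by rw [SimpleGraph.dist_comm (u := z) (v := v)]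
            _ = transmission G u + transmission G v := by
                rw [Finset.sum_add_distrib, transmission, transmission]
        have h2 : transmission G u + transmission G v ≤ 2 * T := by
          have hv : transmission G v ≤ T := Finset.le_sup (mem_univ v)
          have hu2 : transmission G u ≤ T := Finset.le_sup (mem_univ u)
          omega
        calc (n:ℝ) * (G.dist u v) = ((n * G.dist u v : ℕ) : ℝ) := by push_cast; ring
          _ ≤ ((transmission G u + transmission G v : ℕ) : ℝ) := by exact_mod_cast hnat
          _ ≤ ((2 * T : ℕ) : ℝ) := by exact_mod_cast h2
          _ = 2 * T := by push_cast; ring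
      have hxu : x u = 1 := by simp [hx]
      have hxabs : ∀ v, |x v| ≤ 1 := by
        intro v
        have ht0 : 0 ≤ ((n:ℝ)/T) * (G.dist u v) :=
          mul_nonneg (div_nonneg hnR.le hTR.le) (Nat.cast_nonneg _)
        have ht2 : ((n:ℝ)/T) * (G.dist u v) ≤ 2 := by
          rw [div_mul_eq_mul_div, div_le_iff₀ hTR]
          exact h2T v
        rw [hx]
        rw [abs_le]
        constructor <;> [linarith; linarith]
      have hsum0 : (∑ v, x v) = 0 := by
        rw [hx]
        simp only
        rw [Finset.sum_sub_distrib, Finset.sum_const, card_univ, ← Finset.mul_sum, hTu,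
          nsmul_eq_mul, mul_one, ← hn]
        field_simp
        ring
      have hsup1 : (⨆ v, |x v|) = 1 := by
        refine le_antisymm (ciSup_le hxabs) ?_
        calc (1:ℝ) = |x u| := by rw [hxu]; simp
          _ ≤ ⨆ v, |x v| := le_ciSup (f := fun v : V => |x v|)
                (Set.Finite.bddAbove (Set.finite_range _)) u
      have hedge : edgeSup G x = (n:ℝ)/T := by
        have hnT0 : 0 ≤ (n:ℝ)/T := div_nonneg hnR.le hTR.le
        refine le_antisymm ?_ ?_
        · unfold edgeSup
          haveI : Nonempty {p : V × V // G.Adj p.1 p.2} := ⟨⟨(a0, b0), hab⟩⟩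
          refine ciSup_le ?_
          rintro ⟨⟨a, b⟩, h⟩
          have hd1 : G.dist u a ≤ G.dist u b + 1 := by
            have := hG.dist_triangle (u := u) (v := b) (w := a)
            rwa [SimpleGraph.dist_eq_one_iff_adj.mpr h.symm] at this
          have hd2 : G.dist u b ≤ G.dist u a + 1 := by
            have := hG.dist_triangle (u := u) (v := a) (w := b)
            rwa [SimpleGraph.dist_eq_one_iff_adj.mpr h] at this
          have habs : |((G.dist u b : ℝ)) - (G.dist u a : ℝ)| ≤ 1 := by
            rw [abs_le]
            constructor
            · have : ((G.dist u a : ℕ) : ℝ) ≤ ((G.dist u b + 1 : ℕ) : ℝ) := by exact_mod_cast hd1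
              push_cast at this; linarith
            · have : ((G.dist u b : ℕ) : ℝ) ≤ ((G.dist u a + 1 : ℕ) : ℝ) := by exact_mod_cast hd2
              push_cast at this; linarith
          have : x a - x b = ((n:ℝ)/T) * ((G.dist u b : ℝ) - (G.dist u a : ℝ)) := by
            simp only [hx]; ring
          rw [this, abs_mul, abs_of_nonneg hnT0]
          calc ((n:ℝ)/T) * |(G.dist u b : ℝ) - (G.dist u a : ℝ)| ≤ ((n:ℝ)/T) * 1 :=
                mul_le_mul_of_nonneg_left habs hnT0
            _ = (n:ℝ)/T := mul_one _
        · have hduw : G.dist u w = 1 := SimpleGraph.dist_eq_one_iff_adj.mpr hw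
          have hval : x u - x w = (n:ℝ)/T := by
            simp only [hx, hduw, SimpleGraph.dist_self]
            push_cast
            ring
          calc (n:ℝ)/T = |x u - x w| := by rw [hval, abs_of_nonneg hnT0]
            _ ≤ edgeSup G x := le_edgeSup x hw
      exact ⟨x, hsum0, hsup1, hedge.symm⟩
    rw [gamma, ← hS]
    exact le_antisymm (csInf_le ⟨(n:ℝ)/T, hlow⟩ hmem) (le_csInf ⟨_, hmem⟩ hlow)
  · -- no edges: V is a singleton
    haveI hsub : Subsingleton V := by
      constructor
      intro u v
      obtain ⟨p⟩ := hG.preconnected u v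
      cases p with
      | nil => rfl
      | cons h' _ => exact absurd ⟨_, _, h'⟩ hE
    have hT0 : Finset.univ.sup (transmission G) = 0 := by
      rw [← Nat.bot_eq_zero, Finset.sup_eq_bot_iff]
      intro u _
      have : ∀ v, G.dist u v = 0 := fun v => by
        rw [Subsingleton.elim v u]; exact SimpleGraph.dist_self
      simp [transmission, this]
    have hempty : {y | ∃ x : V → ℝ, (∑ v, x v) = 0 ∧ (⨆ v, |x v|) = 1 ∧ y = edgeSup G x} = ∅ := by
      rw [Set.eq_empty_iff_forall_notMem]
      rintro y ⟨x, hsum, hsup, -⟩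
      have hx0 : ∀ v, x v = 0 := by
        intro v
        have h2 := hsum
        have huniv : (Finset.univ : Finset V) = {v} := by
          ext w; simp [Subsingleton.elim w v]
        rwa [huniv, Finset.sum_singleton] at h2
      rw [funext fun v => hx0 v] at hsup
      simp at hsup
    rw [gamma, hempty, Real.sInf_empty, hT0]
    simp

lemma boxProd_walk_le {V W : Type*} {G : SimpleGraph V} {H : SimpleGraph W}
    (hG : G.Connected) (hH : H.Connected) :
    ∀ {x y : V × W} (p : (G □ H).Walk x y),
      G.dist x.1 y.1 + H.dist x.2 y.2 ≤ p.length := by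
  intro x y p
  induction p with
  | nil => simp
  | cons h q ih =>
    rename_i a z w
    rw [SimpleGraph.Walk.length_cons]
    rcases SimpleGraph.boxProd_adj.mp h with ⟨h1, h2⟩ | ⟨h1, h2⟩
    · have hG1 : G.dist a.1 w.1 ≤ 1 + G.dist z.1 w.1 := by
        calc G.dist a.1 w.1 ≤ G.dist a.1 z.1 + G.dist z.1 w.1 := hG.dist_triangle
          _ = 1 + G.dist z.1 w.1 := by rw [SimpleGraph.dist_eq_one_iff_adj.mpr h1]
      have hH1 : H.dist a.2 w.2 = H.dist z.2 w.2 := by rw [h2]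
      omega
    · have hH1 : H.dist a.2 w.2 ≤ 1 + H.dist z.2 w.2 := by
        calc H.dist a.2 w.2 ≤ H.dist a.2 z.2 + H.dist z.2 w.2 := hH.dist_triangle
          _ = 1 + H.dist z.2 w.2 := by rw [SimpleGraph.dist_eq_one_iff_adj.mpr h1]
      have hG1 : G.dist a.1 w.1 = G.dist z.1 w.1 := by rw [h2]
      omega

lemma boxProd_dist {V W : Type*} {G : SimpleGraph V} {H : SimpleGraph W}
    (hG : G.Connected) (hH : H.Connected) (a c : V) (b d : W) :
    (G □ H).dist (a, b) (c, d) = G.dist a c + H.dist b d := by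
  have hGH : (G □ H).Connected := hG.boxProd hH
  apply le_antisymm
  · obtain ⟨p, hp⟩ := (hG.preconnected a c).exists_walk_length_eq_dist
    obtain ⟨q, hq⟩ := (hH.preconnected b d).exists_walk_length_eq_dist
    calc (G □ H).dist (a, b) (c, d) ≤ ((p.boxProdLeft H b).append (q.boxProdRight G c)).length :=
          SimpleGraph.dist_le _
      _ = G.dist a c + H.dist b d := by
          rw [SimpleGraph.Walk.length_append]
          have e1 : (p.boxProdLeft H b).length = p.length := SimpleGraph.Walk.length_map _ _
          have e2 : (q.boxProdRight G c).length = q.length := SimpleGraph.Walk.length_map _ _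
          rw [e1, e2, hp, hq]
  · obtain ⟨r, hr⟩ := (hGH.preconnected (a, b) (c, d)).exists_walk_length_eq_dist
    have := boxProd_walk_le hG hH r
    simpa [hr] using this

theorem stmt18 {V W : Type*} [Fintype V] [Fintype W]
    (G : SimpleGraph V) (H : SimpleGraph W)
    (hG : G.Connected) (hH : H.Connected) :
    gamma (G □ H) = 1 / (1 / gamma G + 1 / gamma H) := by
  haveI : Nonempty V := hG.nonempty
  haveI : Nonempty W := hH.nonempty
  have hGH : (G □ H).Connected := hG.boxProd hH
  set n : ℕ := Fintype.card V with hn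
  set m : ℕ := Fintype.card W with hm
  set TG : ℕ := Finset.univ.sup (transmission G) with hTG
  set TH : ℕ := Finset.univ.sup (transmission H) with hTH
  have htrans : ∀ p : V × W,
      transmission (G □ H) p = m * transmission G p.1 + n * transmission H p.2 := by
    rintro ⟨u, v⟩
    rw [transmission]
    rw [Fintype.sum_prod_type]
    have : ∀ a : V, (∑ b : W, (G □ H).dist (u, v) (a, b))
        = m * G.dist u a + transmission H v := by
      intro a
      have : ∀ b : W, (G □ H).dist (u, v) (a, b) = G.dist u a + H.dist v b :=
        fun b => boxProd_dist hG hH u a v b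
      rw [Finset.sum_congr rfl fun b _ => this b, Finset.sum_add_distrib,
        Finset.sum_const, card_univ, smul_eq_mul, transmission, hm]
    rw [Finset.sum_congr rfl fun a _ => this a, Finset.sum_add_distrib,
      Finset.sum_const, card_univ, smul_eq_mul]
    simp only [transmission, hn, hm, Finset.mul_sum]
    try rw [← Finset.sum_mul]
    try ring
  have hsupGH : Finset.univ.sup (transmission (G □ H)) = m * TG + n * TH := by
    apply le_antisymm
    · refine Finset.sup_le fun p _ => ?_
      rw [htrans]
      exact add_le_add (Nat.mul_le_mul_left _ (Finset.le_sup (mem_univ p.1)))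
        (Nat.mul_le_mul_left _ (Finset.le_sup (mem_univ p.2)))
    · obtain ⟨u0, -, hu0⟩ := Finset.exists_mem_eq_sup Finset.univ univ_nonempty (transmission G)
      obtain ⟨v0, -, hv0⟩ := Finset.exists_mem_eq_sup Finset.univ univ_nonempty (transmission H)
      calc m * TG + n * TH = transmission (G □ H) (u0, v0) := by
            rw [htrans, hTG, hu0, hTH, hv0]
        _ ≤ Finset.univ.sup (transmission (G □ H)) := Finset.le_sup (mem_univ _)
  rw [gamma_eq hG, gamma_eq hH, gamma_eq hGH, hsupGH, Fintype.card_prod]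
  have hnR : ((n:ℕ):ℝ) ≠ 0 := Nat.cast_ne_zero.mpr Fintype.card_pos.ne'
  have hmR : ((m:ℕ):ℝ) ≠ 0 := Nat.cast_ne_zero.mpr Fintype.card_pos.ne'
  rw [one_div_div, one_div_div]
  have hadd : ((TG:ℕ):ℝ) / n + ((TH:ℕ):ℝ) / m = ((m * TG + n * TH : ℕ) : ℝ) / ((n * m : ℕ) : ℝ) := by
    rw [div_add_div _ _ hnR hmR]
    push_cast
    ring_nf
  rw [hadd, one_div_div]
  try push_cast
  try ring_nf
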